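/- Let X be a real Banach space whose modulus of smoothness ρ_X has power type p for some p ∈ (1, 2], i.e. there is A > 0 with ρ_X(τ) ≤ A·τ^p for all τ ∈ (0, 1]. Then there exists a constant C' > 0 (depending only on A and p) such that for every bounded set S ⊆ X, every ε > 0, every integer k ≥ C'·(diam(S)/ε)^{p/(p−1)}, and every a ∈ conv S, the distance from a to conv_k S is at most ε; in particular h⁺(conv S, conv_k S) ≤ ε for all such k. -/

import Mathlib

/-- The modulus of smoothness (Lindenstrauss modulus) of a real normed space `X`:
`ρ_X(τ) = sup { (‖x + τy‖ + ‖x − τy‖)/2 − 1 : ‖x‖ = ‖y‖ ≤ 1 }`. -/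
noncomputable def modSmooth (X : Type*) [NormedAddCommGroup X] [NormedSpace ℝ X] (τ : ℝ) : ℝ :=
  sSup {r : ℝ | ∃ x y : X, ‖x‖ = ‖y‖ ∧ ‖y‖ ≤ 1 ∧
    r = (‖x + τ • y‖ + ‖x - τ • y‖) / 2 - 1}

/-- The `k`-convex hull of a set `S`: all convex combinations of at most `k` points
of `S`. -/
def convHullK {X : Type*} [NormedAddCommGroup X] [NormedSpace ℝ X] (k : ℕ) (S : Set X) :
    Set X :=
  ⋃ (F : Finset X) (_ : ↑F ⊆ S) (_ : F.card ≤ k), convexHull ℝ (F : Set X)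

private lemma bern_aux {p : ℝ} (hp1 : 1 < p) {n : ℕ} (hn : 1 ≤ n) :
    (n : ℝ) ^ (1/p) + (1/p) * ((n : ℝ) + 1) ^ (1/p - 1) ≤ ((n : ℝ) + 1) ^ (1/p) := by
  have hp0 : 0 < p := by linarith
  have hn1 : (1:ℝ) ≤ (n:ℝ) := by exact_mod_cast hn
  set N : ℝ := (n:ℝ) + 1 with hNdef
  have hNpos : (0:ℝ) < N := by simp only [hNdef]; linarith
  have h1N : 1/N ≤ 1 := by rw [div_le_one hNpos]; simp only [hNdef]; linarith
  have h1Npos : 0 < 1/N := by positivity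
  have key : (1 - 1/N) ^ (1/p) ≤ 1 - (1/p) * (1/N) := by
    have h := rpow_one_add_le_one_add_mul_self (s := -(1/N)) (by linarith)
      (p := 1/p) (by positivity) (by rw [div_le_one hp0]; linarith)
    calc (1 - 1/N)^(1/p) = (1 + -(1/N))^(1/p) := by congr 1
      _ ≤ 1 + (1/p) * (-(1/N)) := h
      _ = 1 - (1/p)*(1/N) := by ring
  have hsplit : (n:ℝ) = N * (1 - 1/N) := by field_simp; linarith
  have hbase : (0:ℝ) ≤ 1 - 1/N := by linarith
  calc (n:ℝ)^(1/p) + (1/p)*N^(1/p-1)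
      = (N * (1-1/N))^(1/p) + (1/p)*N^(1/p-1) := by rw [← hsplit]
    _ = N^(1/p) * (1-1/N)^(1/p) + (1/p)*N^(1/p-1) := by
        rw [Real.mul_rpow hNpos.le hbase]
    _ ≤ N^(1/p) * (1 - (1/p)*(1/N)) + (1/p)*N^(1/p-1) := by
        have := mul_le_mul_of_nonneg_left key (Real.rpow_nonneg hNpos.le (1/p))
        linarith
    _ = N^(1/p) - (1/p)*(N^(1/p)/N) + (1/p)*N^(1/p-1) := by ring
    _ = N^(1/p) := by rw [Real.rpow_sub hNpos, Real.rpow_one]; ring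

private lemma smooth_bound {X : Type*} [NormedAddCommGroup X] [NormedSpace ℝ X]
    {p A : ℝ} (hp1 : 1 < p) (hA : 0 < A)
    (hpow : ∀ τ ∈ Set.Ioc (0 : ℝ) 1, modSmooth X τ ≤ A * τ ^ p)
    {u v : X} (hv : v ≠ 0) (huv : ‖v‖ ≤ ‖u‖) (f : X →L[ℝ] ℝ)
    (hf : ‖f‖ ≤ 1) (hfu : f u = ‖u‖) :
    ‖u + v‖ ≤ ‖u‖ + f v + 2 * A * (‖v‖ ^ p * ‖u‖ ^ (1 - p)) := by
  have hv0 : 0 < ‖v‖ := norm_pos_iff.2 hv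
  have hu0 : 0 < ‖u‖ := lt_of_lt_of_le hv0 huv
  have hu0' : u ≠ 0 := norm_pos_iff.1 hu0
  set τ : ℝ := ‖v‖ / ‖u‖ with hτdef
  have hτ0 : 0 < τ := div_pos hv0 hu0
  have hτ1 : τ ≤ 1 := (div_le_one hu0).2 huv
  set r : ℝ := (‖u + v‖ + ‖u - v‖) / (2 * ‖u‖) - 1 with hrdef
  have hmem : r ∈ {r : ℝ | ∃ x y : X, ‖x‖ = ‖y‖ ∧ ‖y‖ ≤ 1 ∧
      r = (‖x + τ • y‖ + ‖x - τ • y‖) / 2 - 1} := by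
    have hnorm1 : ∀ x : X, x ≠ 0 → ‖(‖x‖⁻¹ : ℝ) • x‖ = 1 := fun x hx => by
      rw [norm_smul, norm_inv, norm_norm, inv_mul_cancel₀ (norm_ne_zero_iff.2 hx)]
    refine ⟨(‖u‖⁻¹ : ℝ) • u, (‖v‖⁻¹ : ℝ) • v, ?_, ?_, ?_⟩
    · rw [hnorm1 u hu0', hnorm1 v hv]
    · rw [hnorm1 v hv]
    · have h1 : τ • ((‖v‖⁻¹ : ℝ) • v) = (‖u‖⁻¹ : ℝ) • v := by
        rw [smul_smul]
        congr 1
        rw [hτdef]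
        field_simp
      rw [h1, ← smul_add, ← smul_sub, norm_smul, norm_smul]
      rw [norm_inv, Real.norm_eq_abs, abs_of_pos hu0]
      rw [hrdef]
      field_simp
  have hbdd : BddAbove {r : ℝ | ∃ x y : X, ‖x‖ = ‖y‖ ∧ ‖y‖ ≤ 1 ∧
      r = (‖x + τ • y‖ + ‖x - τ • y‖) / 2 - 1} := by
    refine ⟨τ, ?_⟩
    rintro s ⟨x, y, hxy, hy1, rfl⟩
    have hx1 : ‖x‖ ≤ 1 := hxy ▸ hy1
    have hτy : ‖τ • y‖ ≤ τ := by
      rw [norm_smul, Real.norm_eq_abs, abs_of_pos hτ0]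
      nlinarith
    have h1 : ‖x + τ • y‖ ≤ 1 + τ := (norm_add_le _ _).trans (by linarith)
    have h2 : ‖x - τ • y‖ ≤ 1 + τ := (norm_sub_le _ _).trans (by linarith)
    linarith
  have h2 : r ≤ modSmooth X τ := le_csSup hbdd hmem
  have hle : r ≤ A * τ ^ p := h2.trans (hpow τ ⟨hτ0, hτ1⟩)
  have hfuv : ‖u‖ - f v ≤ ‖u - v‖ := by
    have h3 : f (u - v) ≤ ‖u - v‖ := by
      calc f (u - v) ≤ |f (u - v)| := le_abs_self _
        _ ≤ ‖f‖ * ‖u - v‖ := f.le_opNorm _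
        _ ≤ 1 * ‖u - v‖ := mul_le_mul_of_nonneg_right hf (norm_nonneg _)
        _ = ‖u - v‖ := one_mul _
    rw [map_sub, hfu] at h3
    linarith
  have hup : (0:ℝ) < ‖u‖ ^ p := Real.rpow_pos_of_pos hu0 p
  have hτp : ‖u‖ * τ ^ p = ‖v‖ ^ p * ‖u‖ ^ (1 - p) := by
    rw [hτdef, Real.div_rpow hv0.le hu0.le, Real.rpow_sub hu0, Real.rpow_one]
    field_simp
  have h4 : ‖u + v‖ + ‖u - v‖ ≤ 2 * ‖u‖ + 2 * (‖u‖ * (A * τ ^ p)) := by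
    have h5 : (‖u + v‖ + ‖u - v‖) / (2 * ‖u‖) ≤ 1 + A * τ ^ p := by
      rw [hrdef] at hle; linarith
    have h6 := (div_le_iff₀ (by positivity : (0:ℝ) < 2 * ‖u‖)).1 h5
    nlinarith
  have h4' : ‖u + v‖ + ‖u - v‖ ≤ 2 * ‖u‖ + 2 * A * (‖v‖ ^ p * ‖u‖ ^ (1 - p)) := by
    rw [← hτp]; linarith
  linarith

set_option maxHeartbeats 1000000 in
private lemma greedy_bound {X : Type*} [NormedAddCommGroup X] [NormedSpace ℝ X]
    {p A : ℝ} (hp1 : 1 < p) (hA : 0 < A)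
    (hpow : ∀ τ ∈ Set.Ioc (0 : ℝ) 1, modSmooth X τ ≤ A * τ ^ p)
    {S : Set X} (hS : Bornology.IsBounded S) {a : X} (ha : a ∈ convexHull ℝ S)
    {n : ℕ} (hn : 1 ≤ n) :
    ∃ y ∈ convHullK n S,
      ‖y - a‖ ≤ 2 * (1 + A * p) * Metric.diam S * (n : ℝ) ^ (1/p - 1) := by
  classical
  have hp0 : 0 < p := by linarith
  set M : ℝ := 2 * (1 + A * p) with hMdef
  have hApos : 0 < A * p := mul_pos hA hp0
  have hM2 : (2:ℝ) ≤ M := by simp only [hMdef]; nlinarith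
  have hMpos : (0:ℝ) < M := by linarith
  set D : ℝ := Metric.diam S with hDdef
  have hD : (0:ℝ) ≤ D := Metric.diam_nonneg
  rw [convexHull_eq] at ha
  obtain ⟨ι, t, w, z, hw0, hw1, hz, hcm⟩ := ha
  have hsuma : ∑ i ∈ t, w i • z i = a := by
    rw [← hcm, Finset.centerMass_eq_of_sum_1 _ _ hw1]
  have hza : ∀ i ∈ t, ‖z i - a‖ ≤ D := by
    intro i hi
    have hsub : S ⊆ Metric.closedBall (z i) D := fun x hx =>
      Metric.mem_closedBall.2 (Metric.dist_le_diam_of_mem hS hx (hz i hi))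
    have hmem : a ∈ Metric.closedBall (z i) D := by
      have h := convexHull_min hsub (convex_closedBall _ _)
      rw [convexHull_eq] at h
      exact h ⟨ι, t, w, z, hw0, hw1, hz, hcm⟩
    have hd : dist a (z i) ≤ D := Metric.mem_closedBall.1 hmem
    rw [← dist_eq_norm, dist_comm]
    exact hd
  have hex : ∃ i ∈ t, 0 < w i := by
    by_contra h
    push_neg at h
    have : ∑ i ∈ t, w i ≤ 0 := Finset.sum_nonpos h
    linarith
  have hchoice : ∀ f : X →L[ℝ] ℝ, ∃ i ∈ t, 0 < w i ∧ f (z i - a) ≤ 0 := by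
    intro f
    by_contra hcon
    push_neg at hcon
    have hsum0 : ∑ i ∈ t, w i * f (z i - a) = 0 := by
      have h1 : ∑ i ∈ t, w i * f (z i - a) = f (∑ i ∈ t, w i • (z i - a)) := by
        rw [map_sum]
        refine Finset.sum_congr rfl fun i _ => ?_
        rw [f.map_smul, smul_eq_mul]
      rw [h1]
      have h2 : ∑ i ∈ t, w i • (z i - a) = 0 := by
        simp only [smul_sub]
        rw [Finset.sum_sub_distrib, ← Finset.sum_smul, hw1, one_smul, hsuma, sub_self]
      rw [h2, map_zero]
    obtain ⟨i₀, hi₀, hwi₀⟩ := hex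
    have hpos : 0 < ∑ i ∈ t, w i * f (z i - a) := by
      apply Finset.sum_pos'
      · intro i hi
        rcases (hw0 i hi).lt_or_eq with h | h
        · exact mul_nonneg (hw0 i hi) (hcon i hi h).le
        · rw [← h, zero_mul]
      · exact ⟨i₀, hi₀, mul_pos hwi₀ (hcon i₀ hi₀ hwi₀)⟩
    rw [hsum0] at hpos
    exact lt_irrefl 0 hpos
  induction n, hn using Nat.le_induction with
  | base =>
    obtain ⟨i₀, hi₀, hwi₀⟩ := hex
    refine ⟨z i₀, ?_, ?_⟩
    · simp only [convHullK, Set.mem_iUnion]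
      refine ⟨{z i₀}, by simpa using hz i₀ hi₀, by simp, ?_⟩
      exact subset_convexHull ℝ _ (by simp)
    · have h1 := hza i₀ hi₀
      have h2 : ((1:ℕ):ℝ) ^ (1/p - 1) = 1 := by norm_num
      rw [h2, mul_one]
      nlinarith
  | succ n hn ih =>
    obtain ⟨y, hyK, hy⟩ := ih
    simp only [convHullK, Set.mem_iUnion] at hyK
    obtain ⟨F, hFS, hFc, hyF⟩ := hyK
    have hn1 : (1:ℝ) ≤ (n:ℝ) := by exact_mod_cast hn
    have hcast : ((n + 1 : ℕ) : ℝ) = (n:ℝ) + 1 := by push_cast; ring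
    set N : ℝ := (n:ℝ) + 1 with hNdef
    have hN0 : (0:ℝ) < N := by simp only [hNdef]; linarith
    have hN1 : (1:ℝ) ≤ N := by simp only [hNdef]; linarith
    set c₁ : ℝ := (n:ℝ) / N with hc₁def
    set c₂ : ℝ := 1 / N with hc₂def
    have hc₁0 : 0 ≤ c₁ := by positivity
    have hc₂0 : 0 < c₂ := by positivity
    have hc₁₂ : c₁ + c₂ = 1 := by
      rw [hc₁def, hc₂def]; field_simp; exact hNdef.symm
    have hmem : ∀ j ∈ t, c₁ • y + c₂ • z j ∈ convHullK (n + 1) S := by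
      intro j hj
      simp only [convHullK, Set.mem_iUnion]
      refine ⟨insert (z j) F, ?_, ?_, ?_⟩
      · rw [Finset.coe_insert]
        exact Set.insert_subset (hz j hj) hFS
      · exact (Finset.card_insert_le _ _).trans (by omega)
      · rw [Finset.coe_insert]
        have hy' : y ∈ convexHull ℝ (insert (z j) (F : Set X)) :=
          convexHull_mono (Set.subset_insert _ _) hyF
        have hz' : z j ∈ convexHull ℝ (insert (z j) (F : Set X)) :=
          subset_convexHull ℝ _ (Set.mem_insert _ _)
        exact (convex_convexHull ℝ _) hy' hz' hc₁0 hc₂0.le hc₁₂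
    have hrw : ∀ j : ι, (c₁ • y + c₂ • z j) - a = c₁ • (y - a) + c₂ • (z j - a) := by
      intro j
      calc c₁ • y + c₂ • z j - a = c₁ • y + c₂ • z j - (c₁ + c₂) • a := by
            rw [hc₁₂, one_smul]
        _ = c₁ • (y - a) + c₂ • (z j - a) := by
            rw [add_smul, smul_sub, smul_sub]; abel
    have hNe : N⁻¹ ≤ N ^ (1/p - 1) := by
      rw [← Real.rpow_neg_one N]
      apply Real.rpow_le_rpow_of_exponent_le hN1
      have : 0 < 1/p := by positivity
      linarith
    have aux1 : 2 * (D / N) ≤ M * D * N ^ (1/p - 1) := by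
      calc 2 * (D / N) = (2 * D) * N⁻¹ := by ring
        _ ≤ (M * D) * N ^ (1/p - 1) :=
            mul_le_mul (mul_le_mul_of_nonneg_right hM2 hD) hNe
              (by positivity) (by positivity)
    have hkey1 : c₁ * (M * D * (n:ℝ) ^ (1/p - 1)) = M * D / N * (n:ℝ) ^ (1/p) := by
      rw [Real.rpow_sub (by linarith : (0:ℝ) < (n:ℝ)), Real.rpow_one, hc₁def]
      field_simp
    have hkey2 : M * D / N * (n:ℝ) ^ (1/p) ≤ M * D * N ^ (1/p - 1) := by
      have h1 : (n:ℝ) ^ (1/p) ≤ N ^ (1/p) :=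
        Real.rpow_le_rpow (by positivity) (by simp only [hNdef]; linarith) (by positivity)
      rw [Real.rpow_sub hN0, Real.rpow_one]
      calc M * D / N * (n:ℝ) ^ (1/p) ≤ M * D / N * N ^ (1/p) :=
            mul_le_mul_of_nonneg_left h1 (by positivity)
        _ = M * D * (N ^ (1/p) / N) := by ring
    have hkey3 : M * D / N * (n:ℝ) ^ (1/p) + (M/p) * (D * N ^ (1/p - 2)) ≤
        M * D * N ^ (1/p - 1) := by
      have hb := bern_aux hp1 hn
      have e2 : N ^ (1/p - 2) = N ^ (1/p - 1) / N := by
        rw [show 1/p - 2 = (1/p - 1) - 1 by ring, Real.rpow_sub hN0, Real.rpow_one]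
      have hmul := mul_le_mul_of_nonneg_left hb (show (0:ℝ) ≤ M * D / N by positivity)
      have e3 : M * D / N * N ^ (1/p) = M * D * N ^ (1/p - 1) := by
        rw [Real.rpow_sub hN0, Real.rpow_one]; ring
      have e4 : (M/p) * (D * N ^ (1/p - 2)) = M * D / N * ((1/p) * N ^ (1/p - 1)) := by
        rw [e2]; field_simp
      rw [e4, ← e3]
      nlinarith [hmul]
    rw [hcast]
    by_cases hya : y = a
    · obtain ⟨i₀, hi₀, hwi₀⟩ := hex
      refine ⟨c₁ • y + c₂ • z i₀, hmem i₀ hi₀, ?_⟩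
      rw [hrw i₀, hya, sub_self, smul_zero, zero_add]
      calc ‖c₂ • (z i₀ - a)‖ = c₂ * ‖z i₀ - a‖ := by
            rw [norm_smul, Real.norm_eq_abs, abs_of_pos hc₂0]
        _ ≤ c₂ * D := mul_le_mul_of_nonneg_left (hza i₀ hi₀) hc₂0.le
        _ = D / N := by rw [hc₂def]; ring
        _ ≤ 2 * (D / N) := by
            have : 0 ≤ D / N := by positivity
            linarith
        _ ≤ M * D * N ^ (1/p - 1) := aux1
    · have he : y - a ≠ 0 := sub_ne_zero.2 hya
      obtain ⟨f, hf1, hfe⟩ := exists_dual_vector ℝ (y - a) (norm_ne_zero_iff.2 he)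
      have hfe' : f (y - a) = ‖y - a‖ := by exact_mod_cast hfe
      obtain ⟨i, hit, hwi, hfzi⟩ := hchoice f
      refine ⟨c₁ • y + c₂ • z i, hmem i hit, ?_⟩
      rw [hrw i]
      set u : X := c₁ • (y - a) with hu
      set v : X := c₂ • (z i - a) with hv
      have hnu : ‖u‖ = c₁ * ‖y - a‖ := by
        rw [hu, norm_smul, Real.norm_eq_abs, abs_of_nonneg hc₁0]
      have hnv : ‖v‖ = c₂ * ‖z i - a‖ := by
        rw [hv, norm_smul, Real.norm_eq_abs, abs_of_pos hc₂0]
      have hnvD : ‖v‖ ≤ D / N := by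
        rw [hnv]
        calc c₂ * ‖z i - a‖ ≤ c₂ * D := mul_le_mul_of_nonneg_left (hza i hit) hc₂0.le
          _ = D / N := by rw [hc₂def]; ring
      have hubound : ‖u‖ ≤ c₁ * (M * D * (n:ℝ) ^ (1/p - 1)) := by
        rw [hnu]
        exact mul_le_mul_of_nonneg_left hy hc₁0
      rcases lt_or_ge ‖u‖ ‖v‖ with hcase | hcase
      · calc ‖u + v‖ ≤ ‖u‖ + ‖v‖ := norm_add_le _ _
          _ ≤ 2 * (D / N) := by linarith
          _ ≤ M * D * N ^ (1/p - 1) := aux1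
      · by_cases hv0 : v = 0
        · rw [hv0, add_zero]
          calc ‖u‖ ≤ c₁ * (M * D * (n:ℝ) ^ (1/p - 1)) := hubound
            _ = M * D / N * (n:ℝ) ^ (1/p) := hkey1
            _ ≤ M * D * N ^ (1/p - 1) := hkey2
        · rcases le_or_gt ‖u‖ ((M/2) * D * N ^ (1/p - 1)) with hsmall | hbig
          · calc ‖u + v‖ ≤ ‖u‖ + ‖v‖ := norm_add_le _ _
              _ ≤ 2 * ‖u‖ := by linarith
              _ ≤ M * D * N ^ (1/p - 1) := by linarith
          · have hfu : f u = ‖u‖ := by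
              rw [hu, f.map_smul, smul_eq_mul, hfe', ← hnu]
            have hsm := smooth_bound hp1 hA hpow hv0 hcase f (le_of_eq hf1) hfu
            have hfv : f v ≤ 0 := by
              rw [hv, f.map_smul, smul_eq_mul]
              exact mul_nonpos_of_nonneg_of_nonpos hc₂0.le hfzi
            have hDpos : 0 < D := by
              rcases hD.lt_or_eq with h | h
              · exact h
              · exfalso
                apply hv0
                rw [hv]
                have h1 := hza i hit
                rw [← h] at h1
                have h2 : z i - a = 0 := norm_le_zero_iff.1 h1
                rw [h2, smul_zero]
            have hT0 : (0:ℝ) < (M/2) * D * N ^ (1/p - 1) := by positivity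
            have hD1 : D ^ p * D ^ (1 - p) = D := by
              rw [← Real.rpow_add hDpos]
              norm_num
            have hrem : 2 * A * (‖v‖ ^ p * ‖u‖ ^ (1 - p)) ≤ (M/p) * (D * N ^ (1/p - 2)) := by
              have h1 : ‖v‖ ^ p ≤ (D/N) ^ p :=
                Real.rpow_le_rpow (norm_nonneg _) hnvD hp0.le
              have h2 : ‖u‖ ^ (1 - p) ≤ ((M/2) * D * N ^ (1/p - 1)) ^ (1 - p) :=
                Real.rpow_le_rpow_of_nonpos hT0 hbig.le (by linarith)
              have h3 : 2 * A * (‖v‖ ^ p * ‖u‖ ^ (1 - p)) ≤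
                  2 * A * ((D/N) ^ p * ((M/2) * D * N ^ (1/p - 1)) ^ (1 - p)) := by
                apply mul_le_mul_of_nonneg_left _ (by positivity : (0:ℝ) ≤ 2 * A)
                exact mul_le_mul h1 h2 (Real.rpow_nonneg (norm_nonneg _) _)
                  (Real.rpow_nonneg (by positivity) _)
              have hN2 : N ^ (1/p - 2) = N ^ ((1/p - 1) * (1 - p)) / N ^ p := by
                rw [← Real.rpow_sub hN0]
                congr 1
                field_simp
                ring
              have h4 : (D/N) ^ p * ((M/2) * D * N ^ (1/p - 1)) ^ (1 - p) =
                  (M/2) ^ (1 - p) * (D * N ^ (1/p - 2)) := by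
                rw [Real.div_rpow hD hN0.le,
                  Real.mul_rpow (by positivity : (0:ℝ) ≤ M/2 * D)
                    (Real.rpow_nonneg hN0.le _),
                  Real.mul_rpow (by positivity : (0:ℝ) ≤ M/2) hD,
                  ← Real.rpow_mul hN0.le, hN2]
                linear_combination ((M/2) ^ (1 - p) * N ^ ((1/p - 1) * (1 - p)) / N ^ p) * hD1
              have hM2pos : (0:ℝ) < M/2 := by linarith
              have hMeq : M/2 = 1 + A * p := by rw [hMdef]; ring
              have hMp : A * p ≤ (M/2) ^ p := by
                rw [hMeq]
                calc A * p ≤ 1 + A * p := by linarith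
                  _ = (1 + A * p) ^ (1:ℝ) := (Real.rpow_one _).symm
                  _ ≤ (1 + A * p) ^ p := Real.rpow_le_rpow_of_exponent_le (by linarith) hp1.le
              have h5 : 2 * A * (M/2) ^ (1 - p) ≤ M/p := by
                have h6 : (M/2) ^ (1 - p : ℝ) = (M/2) / (M/2) ^ p := by
                  rw [Real.rpow_sub hM2pos, Real.rpow_one]
                rw [h6]
                have h7 : (0:ℝ) < (M/2) ^ p := Real.rpow_pos_of_pos hM2pos p
                calc 2 * A * ((M/2) / (M/2) ^ p) = (A * M) / (M/2) ^ p := by ring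
                  _ ≤ (A * M) / (A * p) := by gcongr
                  _ = M / p := by rw [mul_div_mul_left _ _ hA.ne']
              calc 2 * A * (‖v‖ ^ p * ‖u‖ ^ (1 - p))
                  ≤ 2 * A * ((D/N) ^ p * ((M/2) * D * N ^ (1/p - 1)) ^ (1 - p)) := h3
                _ = (2 * A * (M/2) ^ (1 - p)) * (D * N ^ (1/p - 2)) := by rw [h4]; ring
                _ ≤ (M/p) * (D * N ^ (1/p - 2)) :=
                    mul_le_mul_of_nonneg_right h5 (by positivity)
            calc ‖u + v‖ ≤ ‖u‖ + f v + 2 * A * (‖v‖ ^ p * ‖u‖ ^ (1 - p)) := hsm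
              _ ≤ c₁ * (M * D * (n:ℝ) ^ (1/p - 1)) + (M/p) * (D * N ^ (1/p - 2)) := by
                  linarith
              _ = M * D / N * (n:ℝ) ^ (1/p) + (M/p) * (D * N ^ (1/p - 2)) := by rw [hkey1]
              _ ≤ M * D * N ^ (1/p - 1) := hkey3

/-- Carathéodory's approximation property for Banach spaces with modulus of smoothness
of power type `p ∈ (1, 2]`: there is a constant `C'` (depending only on `A` and `p`)
such that every point of `conv S` is within `ε` of `conv_k S` once
`k ≥ C' · (diam S / ε)^{p/(p−1)}`. -/
theorem caratheodory_approximation_of_power_type {X : Type*} [NormedAddCommGroup X]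
    [NormedSpace ℝ X] [CompleteSpace X]
    (p A : ℝ) (hp1 : 1 < p) (hp2 : p ≤ 2) (hA : 0 < A)
    (hpow : ∀ τ ∈ Set.Ioc (0 : ℝ) 1, modSmooth X τ ≤ A * τ ^ p) :
    ∃ C' : ℝ, 0 < C' ∧
      ∀ S : Set X, Bornology.IsBounded S → ∀ ε : ℝ, 0 < ε → ∀ k : ℕ,
        C' * (Metric.diam S / ε) ^ (p / (p - 1)) ≤ (k : ℝ) →
        ∀ a ∈ convexHull ℝ S, Metric.infDist a (convHullK k S) ≤ ε := by
  have hp0 : 0 < p := by linarith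
  have hMpos : (0:ℝ) < 2 * (1 + A * p) := by nlinarith
  refine ⟨(2 * (1 + A * p)) ^ (p / (p - 1)), Real.rpow_pos_of_pos hMpos _, ?_⟩
  intro S hS ε hε k hk a ha
  rcases Nat.eq_zero_or_pos k with hk0 | hk1
  · subst hk0
    have hempty : convHullK 0 S = (∅ : Set X) := by
      ext x
      simp only [convHullK, Set.mem_iUnion, Set.mem_empty_iff_false, iff_false]
      rintro ⟨F, hFS, hFc, hx⟩
      have hF : F = ∅ := Finset.card_eq_zero.1 (Nat.le_zero.1 hFc)
      subst hF
      simp at hx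
    rw [hempty, Metric.infDist_empty]
    exact hε.le
  · obtain ⟨y, hyK, hy⟩ := greedy_bound hp1 hA hpow hS ha hk1
    have hle : Metric.infDist a (convHullK k S) ≤ dist a y :=
      Metric.infDist_le_dist_of_mem hyK
    have hdist : dist a y = ‖y - a‖ := by rw [dist_comm, dist_eq_norm]
    have hkpos : (0:ℝ) < (k:ℝ) := by exact_mod_cast hk1
    set M : ℝ := 2 * (1 + A * p) with hMdef
    set D : ℝ := Metric.diam S with hDdef
    have hD : (0:ℝ) ≤ D := Metric.diam_nonneg
    set q : ℝ := p / (p - 1) with hqdef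
    set s : ℝ := (p - 1) / p with hsdef
    have hpne : p - 1 ≠ 0 := by linarith
    have hs0 : 0 < s := by rw [hsdef]; exact div_pos (by linarith) hp0
    have hqs : q * s = 1 := by rw [hqdef, hsdef]; field_simp
    have hfinal : M * D * (k:ℝ) ^ (1/p - 1) ≤ ε := by
      have h1 : (M * (D/ε)) ^ q ≤ (k:ℝ) := by
        calc (M * (D/ε)) ^ q = M ^ q * (D/ε) ^ q := Real.mul_rpow hMpos.le (by positivity)
          _ ≤ (k:ℝ) := hk
      have h2 : M * (D/ε) ≤ (k:ℝ) ^ s := by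
        have h3 : ((M * (D/ε)) ^ q) ^ s ≤ ((k:ℝ)) ^ s :=
          Real.rpow_le_rpow (Real.rpow_nonneg (by positivity) _) h1 hs0.le
        rwa [← Real.rpow_mul (by positivity : (0:ℝ) ≤ M * (D/ε)), hqs, Real.rpow_one] at h3
      have h4 : M * D ≤ ε * (k:ℝ) ^ s := by
        have h5 : (M * D) / ε ≤ (k:ℝ) ^ s := by
          rw [mul_div_assoc]; exact h2
        have h6 := (div_le_iff₀ hε).1 h5
        linarith
      have h6 : (k:ℝ) ^ (1/p - 1) = ((k:ℝ) ^ s)⁻¹ := by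
        rw [show 1/p - 1 = -s by rw [hsdef]; field_simp; ring]
        rw [Real.rpow_neg hkpos.le]
      have hks : (0:ℝ) < (k:ℝ) ^ s := Real.rpow_pos_of_pos hkpos s
      rw [h6]
      calc M * D * ((k:ℝ) ^ s)⁻¹ ≤ (ε * (k:ℝ) ^ s) * ((k:ℝ) ^ s)⁻¹ :=
            mul_le_mul_of_nonneg_right h4 (by positivity)
        _ = ε := by field_simp
    calc Metric.infDist a (convHullK k S) ≤ dist a y := hle
      _ = ‖y - a‖ := hdist
      _ ≤ M * D * (k:ℝ) ^ (1/p - 1) := hy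
      _ ≤ ε := hfinal
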